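/- Equivalence of LR-QR with the β-eliminated problem (Lemma J.1). Let ℋ be a linear subspace of L²(P₁,X), α ∈ (0,1), λ ≥ 0, and suppose E₁[r²] < ∞. Assume there exist h ∈ ℋ and β ∈ ℝ with E₁[ℓ_α(h(X),S)] + λE₁[(βh(X) − r(X))²] < E₁[ℓ_α(0,S)] + λE₁[r(X)²]. Define G_λ(h) = E₁[ℓ_α(h(X),S)] − λ·E₁[r(X)h(X)]²/E₁[h(X)²] for h ∈ ℋ∖{0}. Then: (i) if (h*,β*) is a global minimizer of L_λ(h,β) = E₁[ℓ_α(h(X),S)] + λ(β²E₁[h(X)²] − 2βE₂[h(X)]) over ℋ × ℝ, then h* minimizes G_λ over ℋ∖{0}; (ii) conversely, if h minimizes G_λ over ℋ∖{0}, then (h, E₁[rh]/E₁[h²]) is a global minimizer of L_λ over ℋ × ℝ. -/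

import Mathlib

open MeasureTheory ProbabilityTheory Set
open scoped ENNReal

/-- The pinball (quantile) loss: `ℓ_α(c,s) = (1−α)(s−c)` if `s ≥ c`, and `α(c−s)` if `s < c`. -/
noncomputable def pinball (α c s : ℝ) : ℝ := if c ≤ s then (1 - α) * (s - c) else α * (c - s)

lemma aux_mul_int {𝒳 : Type*} [MeasurableSpace 𝒳] {μ : Measure 𝒳} {f g : 𝒳 → ℝ}
    (hf : MemLp f 2 μ) (hg : MemLp g 2 μ) : Integrable (fun x => f x * g x) μ := by
  refine Integrable.mono' ((hf.integrable_sq.add hg.integrable_sq).const_mul (1/2))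
    (hf.aestronglyMeasurable.mul hg.aestronglyMeasurable) ?_
  filter_upwards with x
  have := sq_nonneg (|f x| - |g x|)
  have h1 : ‖f x * g x‖ = |f x| * |g x| := by rw [Real.norm_eq_abs, abs_mul]
  rw [h1]
  show |f x| * |g x| ≤ 1/2 * (f x ^ 2 + g x ^ 2)
  nlinarith [sq_abs (f x), sq_abs (g x)]

lemma aux_cs {Q C β : ℝ} (hQ : 0 < Q) : -(C^2/Q) ≤ β^2*Q - 2*β*C := by
  have h1 : C^2/Q*Q = C^2 := div_mul_cancel₀ _ hQ.ne'
  nlinarith [sq_nonneg (β*Q - C)]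

theorem lrqr_beta_elimination_equivalence
    {𝒳 : Type*} [MeasurableSpace 𝒳]
    (μX : Measure 𝒳) [IsProbabilityMeasure μX]
    (P : Measure (𝒳 × ℝ)) [IsProbabilityMeasure P]
    (hPX : P.map Prod.fst = μX)
    (hS01 : ∀ᵐ p ∂P, p.2 ∈ Icc (0 : ℝ) 1)
    (H : Set (𝒳 → ℝ))
    (hHlin : ∀ f ∈ H, ∀ g ∈ H, ∀ c₁ c₂ : ℝ, (fun x => c₁ * f x + c₂ * g x) ∈ H)
    (hHL2 : ∀ h ∈ H, MemLp h 2 μX)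
    (α lam : ℝ) (hα : α ∈ Set.Ioo (0 : ℝ) 1) (hlam : 0 ≤ lam)
    (r : 𝒳 → ℝ) (hrmeas : Measurable r) (hrnn : ∀ x, 0 ≤ r x)
    (hrmean : ∫ x, r x ∂μX = 1)
    (hr2 : MemLp r 2 μX)
    -- zero is suboptimal
    (hzero : ∃ h ∈ H, ∃ β : ℝ,
      (∫ p, pinball α (h p.1) p.2 ∂P) + lam * ∫ x, (β * h x - r x) ^ 2 ∂μX
        < (∫ p, pinball α (0 : ℝ) p.2 ∂P) + lam * ∫ x, r x ^ 2 ∂μX) :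
    -- (i)
    (∀ hstar ∈ H, ∀ βstar : ℝ,
      (∀ h ∈ H, ∀ β : ℝ,
        (∫ p, pinball α (hstar p.1) p.2 ∂P)
            + lam * (βstar ^ 2 * (∫ x, hstar x ^ 2 ∂μX) - 2 * βstar * ∫ x, r x * hstar x ∂μX)
          ≤ (∫ p, pinball α (h p.1) p.2 ∂P)
            + lam * (β ^ 2 * (∫ x, h x ^ 2 ∂μX) - 2 * β * ∫ x, r x * h x ∂μX)) →
      hstar ≠ (fun _ => (0 : ℝ)) ∧
        ∀ h ∈ H, h ≠ (fun _ => (0 : ℝ)) →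
          (∫ p, pinball α (hstar p.1) p.2 ∂P)
              - lam * (∫ x, r x * hstar x ∂μX) ^ 2 / (∫ x, hstar x ^ 2 ∂μX)
            ≤ (∫ p, pinball α (h p.1) p.2 ∂P)
              - lam * (∫ x, r x * h x ∂μX) ^ 2 / (∫ x, h x ^ 2 ∂μX))
    ∧
    -- (ii)
    (∀ h ∈ H, h ≠ (fun _ => (0 : ℝ)) →
      (∀ h' ∈ H, h' ≠ (fun _ => (0 : ℝ)) →
        (∫ p, pinball α (h p.1) p.2 ∂P)
            - lam * (∫ x, r x * h x ∂μX) ^ 2 / (∫ x, h x ^ 2 ∂μX)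
          ≤ (∫ p, pinball α (h' p.1) p.2 ∂P)
            - lam * (∫ x, r x * h' x ∂μX) ^ 2 / (∫ x, h' x ^ 2 ∂μX)) →
      ∀ h' ∈ H, ∀ β : ℝ,
        (∫ p, pinball α (h p.1) p.2 ∂P)
            + lam * (((∫ x, r x * h x ∂μX) / (∫ x, h x ^ 2 ∂μX)) ^ 2 * (∫ x, h x ^ 2 ∂μX)
              - 2 * ((∫ x, r x * h x ∂μX) / (∫ x, h x ^ 2 ∂μX)) * ∫ x, r x * h x ∂μX)
          ≤ (∫ p, pinball α (h' p.1) p.2 ∂P)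
            + lam * (β ^ 2 * (∫ x, h' x ^ 2 ∂μX) - 2 * β * ∫ x, r x * h' x ∂μX)) := by
  -- Notation helpers (all stated about arbitrary h so they can be reused).
  have hQnn : ∀ h : 𝒳 → ℝ, 0 ≤ ∫ x, h x ^ 2 ∂μX :=
    fun h => integral_nonneg fun x => sq_nonneg _
  have hAe0 : ∀ h ∈ H, (∫ x, h x ^ 2 ∂μX) = 0 → h =ᵐ[μX] fun _ => 0 := by
    intro h hh hq
    have hint : Integrable (fun x => h x ^ 2) μX := (hHL2 h hh).integrable_sq
    have := (integral_eq_zero_iff_of_nonneg (fun x => sq_nonneg (h x)) hint).mp hq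
    filter_upwards [this] with x hx
    have : h x ^ 2 = 0 := hx
    exact (pow_eq_zero_iff two_ne_zero).mp this
  have hC0 : ∀ h : 𝒳 → ℝ, (h =ᵐ[μX] fun _ => 0) → (∫ x, r x * h x ∂μX) = 0 := by
    intro h hae
    have : (fun x => r x * h x) =ᵐ[μX] fun _ => (0 : ℝ) := by
      filter_upwards [hae] with x hx; simp [hx]
    rw [integral_congr_ae this, integral_zero]
  have hA0 : ∀ h : 𝒳 → ℝ, (h =ᵐ[μX] fun _ => 0) →
      (∫ p, pinball α (h p.1) p.2 ∂P) = ∫ p, pinball α (0 : ℝ) p.2 ∂P := by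
    intro h hae
    have hae' : h =ᵐ[P.map Prod.fst] fun _ => (0 : ℝ) := hPX ▸ hae
    have hcomp : (h ∘ Prod.fst) =ᵐ[P] ((fun _ => (0 : ℝ)) ∘ Prod.fst) :=
      ae_eq_comp measurable_fst.aemeasurable hae'
    refine integral_congr_ae ?_
    filter_upwards [hcomp] with p hp
    have : h p.1 = 0 := hp
    rw [this]
  -- expansion of E[(βh − r)²]
  have hexpand : ∀ h ∈ H, ∀ β : ℝ,
      (∫ x, (β * h x - r x) ^ 2 ∂μX)
        = β ^ 2 * (∫ x, h x ^ 2 ∂μX) - 2 * β * (∫ x, r x * h x ∂μX) + ∫ x, r x ^ 2 ∂μX := by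
    intro h hh β
    have hQi : Integrable (fun x => h x ^ 2) μX := (hHL2 h hh).integrable_sq
    have hCi : Integrable (fun x => r x * h x) μX := aux_mul_int hr2 (hHL2 h hh)
    have hRi : Integrable (fun x => r x ^ 2) μX := hr2.integrable_sq
    have heq : ∀ x, (β * h x - r x) ^ 2
        = (β ^ 2 * h x ^ 2 - 2 * β * (r x * h x)) + r x ^ 2 := by intro x; ring
    have hI1 : Integrable (fun x => β ^ 2 * h x ^ 2 - 2 * β * (r x * h x)) μX :=
      (hQi.const_mul _).sub (hCi.const_mul _)
    have hI2 : Integrable (fun x => β ^ 2 * h x ^ 2) μX := hQi.const_mul _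
    have hI3 : Integrable (fun x => 2 * β * (r x * h x)) μX := hCi.const_mul _
    rw [integral_congr_ae (Filter.Eventually.of_forall heq),
      integral_add hI1 hRi, integral_sub hI2 hI3,
      integral_const_mul, integral_const_mul]
  -- the strictly-better pair, in L form
  obtain ⟨h₀, hh₀, β₀, hlt⟩ := hzero
  have hlt' : (∫ p, pinball α (h₀ p.1) p.2 ∂P)
      + lam * (β₀ ^ 2 * (∫ x, h₀ x ^ 2 ∂μX) - 2 * β₀ * (∫ x, r x * h₀ x ∂μX))
      < ∫ p, pinball α (0 : ℝ) p.2 ∂P := by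
    rw [hexpand h₀ hh₀ β₀, mul_add] at hlt
    linarith
  have hQ₀pos : 0 < ∫ x, h₀ x ^ 2 ∂μX := by
    rcases (hQnn h₀).lt_or_eq with hpos | hz
    · exact hpos
    · exfalso
      have hae := hAe0 h₀ hh₀ hz.symm
      have hc := hC0 h₀ hae
      have ha := hA0 h₀ hae
      rw [ha, ← hz, hc] at hlt'
      simp only [mul_zero, sub_self, add_zero] at hlt'
      exact lt_irrefl _ hlt'
  -- G(h) ≤ L(h, β) whenever Q(h) > 0
  have hGleL : ∀ h : 𝒳 → ℝ, ∀ β : ℝ, 0 < (∫ x, h x ^ 2 ∂μX) →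
      (∫ p, pinball α (h p.1) p.2 ∂P)
          - lam * (∫ x, r x * h x ∂μX) ^ 2 / (∫ x, h x ^ 2 ∂μX)
        ≤ (∫ p, pinball α (h p.1) p.2 ∂P)
          + lam * (β ^ 2 * (∫ x, h x ^ 2 ∂μX) - 2 * β * (∫ x, r x * h x ∂μX)) := by
    intro h β hQ
    have := mul_le_mul_of_nonneg_left (aux_cs (C := ∫ x, r x * h x ∂μX) (β := β) hQ) hlam
    rw [mul_neg] at this
    rw [mul_div_assoc]
    linarith
  -- G(h) = L(h, C/Q)
  have hGeq : ∀ h : 𝒳 → ℝ,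
      (∫ p, pinball α (h p.1) p.2 ∂P)
          - lam * (∫ x, r x * h x ∂μX) ^ 2 / (∫ x, h x ^ 2 ∂μX)
        = (∫ p, pinball α (h p.1) p.2 ∂P)
          + lam * (((∫ x, r x * h x ∂μX) / (∫ x, h x ^ 2 ∂μX)) ^ 2 * (∫ x, h x ^ 2 ∂μX)
            - 2 * ((∫ x, r x * h x ∂μX) / (∫ x, h x ^ 2 ∂μX)) * ∫ x, r x * h x ∂μX) := by
    intro h
    set Q := ∫ x, h x ^ 2 ∂μX
    set C := ∫ x, r x * h x ∂μX
    rcases eq_or_ne Q 0 with hq | hq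
    · rw [hq]; simp
    · field_simp
      ring
  -- nonzero Q forces nonzero function
  have hQne : ∀ h : 𝒳 → ℝ, 0 < (∫ x, h x ^ 2 ∂μX) → h ≠ (fun _ => (0 : ℝ)) := by
    intro h hQ heq
    rw [heq] at hQ
    simp at hQ
  have h₀ne : h₀ ≠ (fun _ => (0 : ℝ)) := hQne h₀ hQ₀pos
  constructor
  · -- part (i)
    intro hstar hsH βstar hmin
    have hQs : 0 < ∫ x, hstar x ^ 2 ∂μX := by
      rcases (hQnn hstar).lt_or_eq with hpos | hz
      · exact hpos
      · exfalso
        have hae := hAe0 hstar hsH hz.symm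
        have hc := hC0 hstar hae
        have ha := hA0 hstar hae
        have h1 := hmin h₀ hh₀ β₀
        rw [ha, ← hz, hc] at h1
        simp only [mul_zero, sub_self, add_zero] at h1
        linarith
    refine ⟨hQne hstar hQs, ?_⟩
    intro h hhH hne
    rcases eq_or_ne (∫ x, h x ^ 2 ∂μX) 0 with hq | hq
    · -- degenerate competitor: h = 0 a.e.
      have hae := hAe0 h hhH hq
      have hc := hC0 h hae
      have ha := hA0 h hae
      rw [ha, hq, hc]
      rw [show lam * (0:ℝ)^2 / 0 = 0 from by norm_num, sub_zero]
      have h1 := hGleL hstar βstar hQs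
      have h2 := hmin h₀ hh₀ β₀
      exact le_of_lt (lt_of_le_of_lt (le_trans h1 h2) hlt')
    · have hQh : 0 < ∫ x, h x ^ 2 ∂μX := lt_of_le_of_ne (hQnn h) (Ne.symm hq)
      have h1 := hGleL hstar βstar hQs
      have h2 := hmin h hhH ((∫ x, r x * h x ∂μX) / (∫ x, h x ^ 2 ∂μX))
      rw [hGeq h]
      exact le_trans h1 h2
  · -- part (ii)
    intro h hhH hne hGmin h' hh'H β
    rw [← hGeq h]
    rcases eq_or_ne (∫ x, h' x ^ 2 ∂μX) 0 with hq | hq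
    · have hae := hAe0 h' hh'H hq
      have hc := hC0 h' hae
      have ha := hA0 h' hae
      rw [ha, hq, hc]
      rw [show lam * (β^2*(0:ℝ) - 2*β*0) = 0 from by ring, add_zero]
      have h1 := hGmin h₀ hh₀ h₀ne
      have h2 := hGleL h₀ β₀ hQ₀pos
      exact le_of_lt (lt_of_le_of_lt (le_trans h1 h2) hlt')
    · have hQh' : 0 < ∫ x, h' x ^ 2 ∂μX := lt_of_le_of_ne (hQnn h') (Ne.symm hq)
      have h1 := hGmin h' hh'H (hQne h' hQh')
      have h2 := hGleL h' β hQh'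
      exact le_trans h1 h2
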